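/- Let A and B be real matrices of the same size. Then rank(A + B) = rank(A) + rank(B) if and only if the column spaces of A and B intersect only in the zero vector and the column spaces of Aᵀ and Bᵀ intersect only in the zero vector. -/

import Mathlib

open Matrix LinearMap Submodule

lemma range_fromColumns_aux {m n₁ n₂ : ℕ} (X : Matrix (Fin m) (Fin n₁) ℝ)
    (Y : Matrix (Fin m) (Fin n₂) ℝ) :
    LinearMap.range (Matrix.fromCols X Y).mulVecLin
      = LinearMap.range X.mulVecLin ⊔ LinearMap.range Y.mulVecLin := by
  apply le_antisymm
  · rintro _ ⟨v, rfl⟩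
    rw [Matrix.mulVecLin_apply]
    have hv : v = Sum.elim (v ∘ Sum.inl) (v ∘ Sum.inr) := by ext (i | i) <;> rfl
    rw [hv, Matrix.fromCols_mulVec_sumElim]
    exact Submodule.add_mem_sup ⟨_, rfl⟩ ⟨_, rfl⟩
  · rw [sup_le_iff]
    constructor
    · rintro _ ⟨v, rfl⟩
      exact ⟨Sum.elim v 0, by simp [Matrix.mulVecLin_apply]⟩
    · rintro _ ⟨v, rfl⟩
      exact ⟨Sum.elim 0 v, by simp [Matrix.mulVecLin_apply]⟩

lemma ker_fromRows_aux {m₁ m₂ n : ℕ} (A : Matrix (Fin m₁) (Fin n) ℝ)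
    (B : Matrix (Fin m₂) (Fin n) ℝ) :
    LinearMap.ker (Matrix.fromRows A B).mulVecLin
      = LinearMap.ker A.mulVecLin ⊓ LinearMap.ker B.mulVecLin := by
  ext x
  simp only [LinearMap.mem_ker, Matrix.mulVecLin_apply, Matrix.fromRows_mulVec,
    Submodule.mem_inf, funext_iff, Sum.forall, Sum.elim_inl, Sum.elim_inr, Pi.zero_apply]

/-- One direction of Marsaglia–Styan: equality of ranks forces trivial column-space
intersection. -/
lemma inf_eq_bot_of_rank_add {m n : ℕ} (A B : Matrix (Fin m) (Fin n) ℝ)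
    (h : (A + B).rank = A.rank + B.rank) :
    LinearMap.range A.mulVecLin ⊓ LinearMap.range B.mulVecLin = ⊥ := by
  have hle : LinearMap.range (A + B).mulVecLin
      ≤ LinearMap.range A.mulVecLin ⊔ LinearMap.range B.mulVecLin := by
    rintro _ ⟨v, rfl⟩
    rw [Matrix.mulVecLin_apply, Matrix.add_mulVec]
    exact Submodule.add_mem_sup ⟨v, rfl⟩ ⟨v, rfl⟩
  have h1 := Submodule.finrank_sup_add_finrank_inf_eq
    (LinearMap.range A.mulVecLin) (LinearMap.range B.mulVecLin)
  have h2 : (A + B).rank ≤ Module.finrank ℝ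
      ↥(LinearMap.range A.mulVecLin ⊔ LinearMap.range B.mulVecLin) :=
    Submodule.finrank_mono hle
  rw [← Submodule.finrank_eq_zero (R := ℝ)]
  unfold Matrix.rank at h h2
  omega

theorem rank_add_eq_add_rank_iff {m n : ℕ} (A B : Matrix (Fin m) (Fin n) ℝ) :
    (A + B).rank = A.rank + B.rank ↔
      (LinearMap.range A.mulVecLin ⊓ LinearMap.range B.mulVecLin = ⊥ ∧
       LinearMap.range A.transpose.mulVecLin ⊓ LinearMap.range B.transpose.mulVecLin = ⊥) := by
  constructor
  · intro h
    refine ⟨inf_eq_bot_of_rank_add A B h, inf_eq_bot_of_rank_add Aᵀ Bᵀ ?_⟩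
    rw [← Matrix.transpose_add, Matrix.rank_transpose, Matrix.rank_transpose,
      Matrix.rank_transpose, h]
  · rintro ⟨hC, hT⟩
    -- kernel of A+B equals ker A ⊓ ker B, thanks to the column condition
    have hker : LinearMap.ker (A + B).mulVecLin
        = LinearMap.ker A.mulVecLin ⊓ LinearMap.ker B.mulVecLin := by
      ext x
      simp only [LinearMap.mem_ker, Matrix.mulVecLin_apply, Submodule.mem_inf,
        Matrix.add_mulVec]
      constructor
      · intro hx
        have hmem : A.mulVec x ∈ LinearMap.range A.mulVecLin ⊓ LinearMap.range B.mulVecLin := by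
          refine ⟨⟨x, rfl⟩, ⟨-x, ?_⟩⟩
          rw [Matrix.mulVecLin_apply, Matrix.mulVec_neg, eq_comm]
          exact eq_neg_of_add_eq_zero_left hx
        rw [hC, Submodule.mem_bot] at hmem
        refine ⟨hmem, ?_⟩
        rw [hmem] at hx; simpa using hx
      · rintro ⟨h1, h2⟩
        rw [h1, h2, add_zero]
    -- compute finrank (ker A ⊓ ker B) via the stacked matrix
    set C := Matrix.fromRows A B with hCdef
    have hrankC : C.rank = A.rank + B.rank := by
      rw [← Matrix.rank_transpose, hCdef, Matrix.transpose_fromRows]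
      unfold Matrix.rank
      rw [range_fromColumns_aux]
      have := Submodule.finrank_sup_add_finrank_inf_eq
        (LinearMap.range Aᵀ.mulVecLin) (LinearMap.range Bᵀ.mulVecLin)
      rw [hT, finrank_bot, add_zero] at this
      rw [this]
      have hA := Matrix.rank_transpose A
      have hB := Matrix.rank_transpose B
      unfold Matrix.rank at hA hB
      omega
    have hrn1 := LinearMap.finrank_range_add_finrank_ker C.mulVecLin
    have hrn2 := LinearMap.finrank_range_add_finrank_ker (A + B).mulVecLin
    rw [hker, ← ker_fromRows_aux, ← hCdef] at hrn2
    unfold Matrix.rank at hrankC ⊢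
    omega
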